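/- Let (Ω, μ) be a probability space, let 𝒮, 𝒳, 𝒴 be finite nonempty types, and let S : Ω → 𝒮, X : Ω → 𝒳, Y : Ω → 𝒴 be random variables such that μ(Y = y ∧ S = s) > 0 for all y ∈ 𝒴 and s ∈ 𝒮. Suppose S and X are conditionally independent given Y, i.e. for all s ∈ 𝒮, x ∈ 𝒳, y ∈ 𝒴 one has P(S = s ∧ X = x | Y = y) = P(S = s | Y = y) · P(X = x | Y = y). Then for every function q : 𝒳 → ℝ and every pair s⁺, s⁻ ∈ 𝒮, the direct effect DE(s⁺, s⁻) := Σ_{x ∈ 𝒳} Σ_{y ∈ 𝒴} q(x) · P(X = x | Y = y ∧ S = s⁺) · P(Y = y | S = s⁻) − Σ_{x ∈ 𝒳} Σ_{y ∈ 𝒴} q(x) · P(X = x | Y = y ∧ S = s⁻) · P(Y = y | S = s⁻) equals 0. -/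

import Mathlib

open MeasureTheory

/-- Conditional probability `P(A | B) = μ(A ∩ B) / μ(B)` as a real number. -/
noncomputable def condP {Ω : Type*} [MeasurableSpace Ω] (μ : Measure Ω) (A B : Set Ω) : ℝ :=
  (μ (A ∩ B)).toReal / (μ B).toReal

/-- Sufficiency direction of Theorem 1: if `S` and `X` are conditionally independent
given `Y`, then the path-specific direct effect of `S` on the prediction vanishes. -/
theorem direct_effect_eq_zero_of_condIndep
    {Ω : Type*} [MeasurableSpace Ω] (μ : Measure Ω) [IsProbabilityMeasure μ]
    {𝒮 𝒳 𝒴 : Type*} [Fintype 𝒮] [Fintype 𝒳] [Fintype 𝒴]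
    [Nonempty 𝒮] [Nonempty 𝒳] [Nonempty 𝒴]
    (S : Ω → 𝒮) (X : Ω → 𝒳) (Y : Ω → 𝒴)
    (hpos : ∀ (y : 𝒴) (s : 𝒮), 0 < μ {ω | Y ω = y ∧ S ω = s})
    (hCI : ∀ (s : 𝒮) (x : 𝒳) (y : 𝒴),
      condP μ {ω | S ω = s ∧ X ω = x} {ω | Y ω = y}
        = condP μ {ω | S ω = s} {ω | Y ω = y} * condP μ {ω | X ω = x} {ω | Y ω = y})
    (q : 𝒳 → ℝ) (splus sminus : 𝒮) :
    (∑ x : 𝒳, ∑ y : 𝒴,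
        q x * condP μ {ω | X ω = x} {ω | Y ω = y ∧ S ω = splus}
            * condP μ {ω | Y ω = y} {ω | S ω = sminus})
      - (∑ x : 𝒳, ∑ y : 𝒴,
        q x * condP μ {ω | X ω = x} {ω | Y ω = y ∧ S ω = sminus}
            * condP μ {ω | Y ω = y} {ω | S ω = sminus}) = 0 := by
  have key : ∀ (s : 𝒮) (x : 𝒳) (y : 𝒴),
      condP μ {ω | X ω = x} {ω | Y ω = y ∧ S ω = s}
        = condP μ {ω | X ω = x} {ω | Y ω = y} := by
    intro s x y
    have hCI' := hCI s x y
    have hsub : μ {ω | Y ω = y ∧ S ω = s} ≤ μ {ω | Y ω = y} :=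
      measure_mono (fun ω h => h.1)
    have hbpos : 0 < (μ {ω | Y ω = y}).toReal := by
      refine ENNReal.toReal_pos ?_ (measure_ne_top μ _)
      exact fun h => absurd (le_antisymm (h ▸ hsub) (zero_le)) (hpos y s).ne'
    have hcpos : 0 < (μ {ω | Y ω = y ∧ S ω = s}).toReal :=
      ENNReal.toReal_pos (hpos y s).ne' (measure_ne_top μ _)
    have hset1 : {ω | X ω = x} ∩ {ω | Y ω = y ∧ S ω = s}
        = {ω | S ω = s ∧ X ω = x} ∩ {ω | Y ω = y} := by
      ext ω; simp only [Set.mem_inter_iff, Set.mem_setOf_eq]; tauto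
    have hset2 : {ω | S ω = s} ∩ {ω | Y ω = y} = {ω | Y ω = y ∧ S ω = s} := by
      ext ω; simp only [Set.mem_inter_iff, Set.mem_setOf_eq]; tauto
    unfold condP at hCI' ⊢
    rw [hset1]
    rw [hset2] at hCI'
    field_simp at hCI' ⊢
    nlinarith [hCI']
  have : ∀ x : 𝒳, ∀ y : 𝒴,
      q x * condP μ {ω | X ω = x} {ω | Y ω = y ∧ S ω = splus}
          * condP μ {ω | Y ω = y} {ω | S ω = sminus}
        = q x * condP μ {ω | X ω = x} {ω | Y ω = y ∧ S ω = sminus}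
          * condP μ {ω | Y ω = y} {ω | S ω = sminus} := by
    intro x y; rw [key splus x y, key sminus x y]
  rw [sub_eq_zero]
  exact Finset.sum_congr rfl fun x _ => Finset.sum_congr rfl fun y _ => this x y
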